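/- Fix T > 0 and 0 ≤ σ₀ < σ̄. Let E : [σ₀,σ̄] → ℝ be continuous and differentiable, with E′ strictly decreasing on an interval (a,b) ⊆ [σ₀,σ̄]. Let σ : [0,T] → [σ₀,σ̄] be left-continuous and satisfy conditions (a′), (b′), (c′). Suppose t₀ ∈ (0,T] is such that the upper left derivative σ̇⊖(t₀) := limsup_{s→t₀⁻} (σ(t₀) − σ(s))/(t₀ − s) is strictly positive and σ(t₀) ∈ (a,b). Then for every t ∈ (t₀, T], σ(t) ∉ (a,b). -/

import Mathlib

open Set

set_option maxHeartbeats 1000000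

open Filter MeasureTheory Topology in
/-- Remark 5.3: once the evolution is moving inside a strict concavity interval of the
energy, it can never again take values in that interval. -/
theorem evolution_escapes_concavity_interval
    (T σ₀ σmax a b : ℝ) (hT : 0 < T) (h0 : 0 ≤ σ₀) (h1 : σ₀ < σmax)
    (hab : Ioo a b ⊆ Icc σ₀ σmax)
    (E : ℝ → ℝ) (hE : ContinuousOn E (Icc σ₀ σmax))
    (E' : ℝ → ℝ)
    (hdiff : ∀ x ∈ Icc σ₀ σmax, HasDerivWithinAt E (E' x) (Icc σ₀ σmax) x)
    (hE'anti : StrictAntiOn E' (Ioo a b))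
    (σ : ℝ → ℝ)
    (hmap : ∀ t ∈ Icc (0:ℝ) T, σ t ∈ Icc σ₀ σmax)
    (hlc : ∀ t ∈ Ioc (0:ℝ) T, ContinuousWithinAt σ (Iio t) t)
    (ha' : ∀ t ∈ Icc (0:ℝ) T, 0 ≤ 1 + t ^ 2 * E' (σ t))
    (hb' : MonotoneOn σ (Icc 0 T))
    (hc' : ∀ s t : ℝ, 0 ≤ s → s < t → t ≤ T →
      t ^ 2 * E (σ t) + σ t ≤ s ^ 2 * E (σ s) + σ s + 2 * ∫ τ in s..t, τ * E (σ τ))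
    (t₀ : ℝ) (ht₀ : t₀ ∈ Ioc 0 T)
    (hpos : 0 < Filter.limsup (fun s => (((σ t₀ - σ s) / (t₀ - s) : ℝ) : EReal))
      (nhdsWithin t₀ (Iio t₀)))
    (hσt₀ : σ t₀ ∈ Ioo a b) :
    ∀ t ∈ Ioc t₀ T, σ t ∉ Ioo a b := by
  obtain ⟨ht₀pos, ht₀T⟩ := ht₀
  have h01 : σ₀ ≤ σmax := h1.le
  have ht₀ne : t₀ ≠ 0 := ne_of_gt ht₀pos
  have ht₀mem : t₀ ∈ Icc (0:ℝ) T := ⟨ht₀pos.le, ht₀T⟩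
  have hσt₀mem : σ t₀ ∈ Icc σ₀ σmax := hmap t₀ ht₀mem
  obtain ⟨M, hM⟩ := (isCompact_Icc : IsCompact (Icc σ₀ σmax)).exists_bound_of_continuousOn hE
  have hM0 : 0 ≤ M := le_trans (norm_nonneg _) (hM (σ t₀) hσt₀mem)
  have hc0 : 0 ≤ 1 + t₀ ^ 2 * E' (σ t₀) := ha' t₀ ht₀mem
  -- interval integrability of the integrand, via monotone/continuous extensions
  have hprojmem : ∀ x : ℝ, min (max x 0) T ∈ Icc (0:ℝ) T :=
    fun x => ⟨le_min (le_max_right x 0) hT.le, min_le_right _ _⟩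
  have hσtil_mono : Monotone (fun x => σ (min (max x 0) T)) := by
    intro x y hxy
    exact hb' (hprojmem x) (hprojmem y) (min_le_min (max_le_max hxy le_rfl) le_rfl)
  have hprojσ_cont : Continuous (fun x : ℝ => min (max x σ₀) σmax) :=
    (continuous_id.max continuous_const).min continuous_const
  have hprojσ_mem : ∀ x : ℝ, min (max x σ₀) σmax ∈ Icc σ₀ σmax :=
    fun x => ⟨le_min (le_max_right x σ₀) h01, min_le_right _ _⟩
  have hEtil_cont : Continuous (fun x => E (min (max x σ₀) σmax)) :=
    hE.comp_continuous hprojσ_cont hprojσ_mem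
  have hproj_id : ∀ x ∈ Icc σ₀ σmax, min (max x σ₀) σmax = x := fun x hx => by
    rw [max_eq_left hx.1, min_eq_left hx.2]
  have hmeasg : Measurable (fun τ : ℝ => τ * E (min (max (σ (min (max τ 0) T)) σ₀) σmax)) :=
    measurable_id.mul (hEtil_cont.measurable.comp hσtil_mono.measurable)
  have hInt : ∀ s : ℝ, 0 ≤ s → s ≤ t₀ →
      IntervalIntegrable (fun τ => τ * E (σ τ)) volume s t₀ := by
    intro s hs0 hst
    rw [intervalIntegrable_iff_integrableOn_Ioc_of_le hst]
    have hg : IntegrableOn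
        (fun τ : ℝ => τ * E (min (max (σ (min (max τ 0) T)) σ₀) σmax)) (Ioc s t₀) volume := by
      refine Integrable.mono' (g := fun _ => t₀ * M)
        (integrableOn_const measure_Ioc_lt_top.ne)
        hmeasg.aestronglyMeasurable.restrict ?_
      filter_upwards [ae_restrict_mem measurableSet_Ioc] with τ hτ
      have h1' : σ (min (max τ 0) T) ∈ Icc σ₀ σmax := hmap _ (hprojmem τ)
      rw [hproj_id _ h1', Real.norm_eq_abs, abs_mul]
      have h2' : |τ| ≤ t₀ := by rw [abs_of_nonneg (hs0.trans hτ.1.le)]; exact hτ.2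
      have h3' : |E (σ (min (max τ 0) T))| ≤ M := by
        have := hM _ h1'; rwa [Real.norm_eq_abs] at this
      exact mul_le_mul h2' h3' (abs_nonneg _) ht₀pos.le
    refine hg.congr_fun ?_ measurableSet_Ioc
    intro τ hτ
    have hτmem : τ ∈ Icc (0:ℝ) T := ⟨hs0.trans hτ.1.le, hτ.2.trans ht₀T⟩
    show τ * E (min (max (σ (min (max τ 0) T)) σ₀) σmax) = τ * E (σ τ)
    rw [max_eq_left hτmem.1, min_eq_left hτmem.2, hproj_id _ (hmap τ hτmem)]
  -- left limit facts
  have hσtendsto : Filter.Tendsto σ (nhdsWithin t₀ (Iio t₀)) (nhds (σ t₀)) :=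
    hlc t₀ ⟨ht₀pos, ht₀T⟩
  have hmemIoo : Ioo 0 t₀ ∈ nhdsWithin t₀ (Iio t₀) :=
    Ioo_mem_nhdsLT_of_mem ⟨ht₀pos, le_refl t₀⟩
  have hσmemev : ∀ᶠ s in nhdsWithin t₀ (Iio t₀), σ s ∈ Icc σ₀ σmax := by
    filter_upwards [hmemIoo] with s hs
    exact hmap s ⟨hs.1.le, hs.2.le.trans ht₀T⟩
  have hσtendsto' : Filter.Tendsto σ (nhdsWithin t₀ (Iio t₀))
      (nhdsWithin (σ t₀) (Icc σ₀ σmax)) :=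
    tendsto_nhdsWithin_iff.2 ⟨hσtendsto, hσmemev⟩
  -- Key fact: the constraint is active at t₀
  have key : 1 + t₀ ^ 2 * E' (σ t₀) = 0 := by
    by_contra hkey
    have hcpos : 0 < 1 + t₀ ^ 2 * E' (σ t₀) := lt_of_le_of_ne hc0 (Ne.symm hkey)
    obtain ⟨z, hz0, hzL⟩ := exists_between hpos
    have hzt : z ≠ ⊤ := (hzL.trans_le le_top).ne
    have hzb : z ≠ ⊥ := ne_bot_of_gt hz0
    lift z to ℝ using ⟨hzt, hzb⟩
    have hr0 : (0:ℝ) < z := by exact_mod_cast hz0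
    set ε₁ : ℝ := (1 + t₀ ^ 2 * E' (σ t₀)) / (2 * t₀ ^ 2) with hε₁def
    have hε₁pos : 0 < ε₁ := div_pos hcpos (by positivity)
    have hε₁eq : t₀ ^ 2 * ε₁ = (1 + t₀ ^ 2 * E' (σ t₀)) / 2 := by
      rw [hε₁def]; field_simp
    have hδpos : 0 < (1 + t₀ ^ 2 * E' (σ t₀)) / 2 * z := mul_pos (half_pos hcpos) hr0
    set ε₃ : ℝ := ((1 + t₀ ^ 2 * E' (σ t₀)) / 2 * z) / (8 * t₀) with hε₃def
    have hε₃pos : 0 < ε₃ := div_pos hδpos (by linarith)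
    set ε₄ : ℝ := ((1 + t₀ ^ 2 * E' (σ t₀)) / 2 * z) / (6 * (M + 1)) with hε₄def
    have hε₄pos : 0 < ε₄ := div_pos hδpos (by linarith)
    have hε₃eq : 4 * t₀ * ε₃ = ((1 + t₀ ^ 2 * E' (σ t₀)) / 2 * z) / 2 := by
      rw [hε₃def]; field_simp; ring
    have hε₄eq : ε₄ * (M + 1) = ((1 + t₀ ^ 2 * E' (σ t₀)) / 2 * z) / 6 := by
      rw [hε₄def]; field_simp
    have hstep3 : 3 * ε₄ * M + 4 * t₀ * ε₃ ≤ (1 + t₀ ^ 2 * E' (σ t₀)) / 2 * z := by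
      nlinarith [hε₃eq, hε₄eq, hε₄pos]
    -- the events
    obtain ⟨δ₃, hδ₃pos, hδ₃⟩ := Metric.continuousWithinAt_iff.1 (hE (σ t₀) hσt₀mem) ε₃ hε₃pos
    have e2 : Ioo (t₀ - ε₄) t₀ ∈ nhdsWithin t₀ (Iio t₀) :=
      Ioo_mem_nhdsLT_of_mem ⟨by linarith, le_refl t₀⟩
    have e3 : ∀ᶠ s in nhdsWithin t₀ (Iio t₀), dist (σ s) (σ t₀) < δ₃ :=
      (Metric.tendsto_nhds.1 hσtendsto) δ₃ hδ₃pos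
    have hder := (hasDerivWithinAt_iff_isLittleO.1 (hdiff (σ t₀) hσt₀mem)).bound hε₁pos
    have e4 := hσtendsto'.eventually hder
    have hev : ∀ᶠ s in nhdsWithin t₀ (Iio t₀),
        (((σ t₀ - σ s) / (t₀ - s) : ℝ) : EReal) ≤ ((z : ℝ) : EReal) := by
      filter_upwards [hmemIoo, e2, e3, e4] with s hs1 hs2 hs3 hs4
      have hs0 : 0 < s := hs1.1
      have hst : s < t₀ := hs1.2
      have hts : 0 < t₀ - s := by linarith
      have hε4s : t₀ - s < ε₄ := by have := hs2.1; linarith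
      have hsmem : s ∈ Icc (0:ℝ) T := ⟨hs0.le, hst.le.trans ht₀T⟩
      have hσsmem : σ s ∈ Icc σ₀ σmax := hmap s hsmem
      have hD0 : σ s ≤ σ t₀ := hb' hsmem ht₀mem hst.le
      -- derivative estimate
      rw [Real.norm_eq_abs, Real.norm_eq_abs, smul_eq_mul] at hs4
      have habs : |σ s - σ t₀| = σ t₀ - σ s := by
        rw [abs_sub_comm, abs_of_nonneg (by linarith)]
      rw [habs] at hs4
      have hd2 : E (σ s) - E (σ t₀) - (σ s - σ t₀) * E' (σ t₀) ≤ ε₁ * (σ t₀ - σ s) :=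
        (abs_le.1 hs4).2
      -- continuity estimate at s
      have hEsc : |E (σ s) - E (σ t₀)| < ε₃ := by
        have := hδ₃ hσsmem hs3; rwa [Real.dist_eq] at this
      have hEsM : E (σ s) ≤ M := by
        have := hM _ hσsmem; rw [Real.norm_eq_abs] at this
        exact le_trans (le_abs_self _) this
      -- pointwise bound on the integrand
      have hA : ∀ τ ∈ Set.uIoc s t₀, ‖τ * E (σ τ) - t₀ * E (σ t₀)‖ ≤ ε₄ * M + t₀ * ε₃ := by
        intro τ hτ
        rw [uIoc_of_le hst.le] at hτ
        have hτmem : τ ∈ Icc (0:ℝ) T := ⟨hs0.le.trans hτ.1.le, hτ.2.trans ht₀T⟩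
        have hστ1 : σ s ≤ σ τ := hb' hsmem hτmem hτ.1.le
        have hστ2 : σ τ ≤ σ t₀ := hb' hτmem ht₀mem hτ.2
        have hστmem : σ τ ∈ Icc σ₀ σmax := hmap τ hτmem
        have hdistτ : dist (σ τ) (σ t₀) < δ₃ := by
          rw [Real.dist_eq] at hs3 ⊢
          rw [abs_sub_comm, abs_of_nonneg (by linarith)]
          rw [abs_sub_comm, abs_of_nonneg (by linarith)] at hs3
          linarith
        have hEτ : |E (σ τ) - E (σ t₀)| < ε₃ := by
          have := hδ₃ hστmem hdistτ; rwa [Real.dist_eq] at this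
        have hMτ : |E (σ τ)| ≤ M := by
          have := hM _ hστmem; rwa [Real.norm_eq_abs] at this
        have hrw : τ * E (σ τ) - t₀ * E (σ t₀)
            = (τ - t₀) * E (σ τ) + t₀ * (E (σ τ) - E (σ t₀)) := by ring
        rw [Real.norm_eq_abs, hrw]
        calc |(τ - t₀) * E (σ τ) + t₀ * (E (σ τ) - E (σ t₀))|
            ≤ |(τ - t₀) * E (σ τ)| + |t₀ * (E (σ τ) - E (σ t₀))| := abs_add_le _ _
          _ = |τ - t₀| * |E (σ τ)| + |t₀| * |E (σ τ) - E (σ t₀)| := by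
              rw [abs_mul, abs_mul]
          _ ≤ ε₄ * M + t₀ * ε₃ := by
              have h5 : |τ - t₀| ≤ ε₄ := by
                rw [abs_of_nonpos (by linarith [hτ.2] : τ - t₀ ≤ 0)]; linarith [hτ.1]
              rw [abs_of_pos ht₀pos]
              exact add_le_add (mul_le_mul h5 hMτ (abs_nonneg _) hε₄pos.le)
                (mul_le_mul_of_nonneg_left hEτ.le ht₀pos.le)
      -- integral estimate
      have hbnd := intervalIntegral.norm_integral_le_of_norm_le_const hA
      have hIeq : (∫ τ in s..t₀, (τ * E (σ τ) - t₀ * E (σ t₀)))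
          = (∫ τ in s..t₀, τ * E (σ τ)) - (t₀ - s) * (t₀ * E (σ t₀)) := by
        rw [intervalIntegral.integral_sub (hInt s hs0.le hst.le) intervalIntegrable_const,
          intervalIntegral.integral_const, smul_eq_mul]
      rw [hIeq, Real.norm_eq_abs, abs_of_pos hts] at hbnd
      have hm0 : (∫ τ in s..t₀, τ * E (σ τ)) - (t₀ - s) * (t₀ * E (σ t₀))
          ≤ (ε₄ * M + t₀ * ε₃) * (t₀ - s) := (abs_le.1 hbnd).2
      have hm1 : 2 * (t₀ - s) * t₀ * (E (σ t₀) - E (σ s)) ≤ 2 * (t₀ - s) * t₀ * ε₃ :=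
        mul_le_mul_of_nonneg_left (by linarith [(abs_lt.1 hEsc).1])
          (mul_nonneg (by linarith) ht₀pos.le)
      have hm2 : (t₀ - s) ^ 2 * E (σ s) ≤ (t₀ - s) ^ 2 * M :=
        mul_le_mul_of_nonneg_left hEsM (sq_nonneg _)
      have hm3 : (t₀ - s) ^ 2 * M ≤ (t₀ - s) * ε₄ * M := by
        nlinarith [mul_nonneg hts.le hM0, hε4s]
      have hstep2 : 2 * (∫ τ in s..t₀, τ * E (σ τ)) - (t₀ ^ 2 - s ^ 2) * E (σ s)
          ≤ (t₀ - s) * (3 * ε₄ * M + 4 * t₀ * ε₃) := by linarith [hm0, hm1, hm2, hm3]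
      -- energy inequality
      have hF1 := hc' s t₀ hs0.le hst ht₀T
      have h2 : t₀ ^ 2 * ((σ t₀ - σ s) * E' (σ t₀) - ε₁ * (σ t₀ - σ s))
          ≤ t₀ ^ 2 * (E (σ t₀) - E (σ s)) :=
        mul_le_mul_of_nonneg_left (by nlinarith [hd2]) (sq_nonneg t₀)
      have h3 : t₀ ^ 2 * ε₁ * (σ t₀ - σ s)
          = (1 + t₀ ^ 2 * E' (σ t₀)) / 2 * (σ t₀ - σ s) := by rw [hε₁eq]
      have hstep1 : (1 + t₀ ^ 2 * E' (σ t₀)) / 2 * (σ t₀ - σ s)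
          ≤ 2 * (∫ τ in s..t₀, τ * E (σ τ)) - (t₀ ^ 2 - s ^ 2) * E (σ s) := by
        nlinarith [hF1, h2, h3]
      have hstep4 : (t₀ - s) * (3 * ε₄ * M + 4 * t₀ * ε₃)
          ≤ (t₀ - s) * ((1 + t₀ ^ 2 * E' (σ t₀)) / 2 * z) :=
        mul_le_mul_of_nonneg_left hstep3 hts.le
      have hfinal : (1 + t₀ ^ 2 * E' (σ t₀)) / 2 * (σ t₀ - σ s)
          ≤ (1 + t₀ ^ 2 * E' (σ t₀)) / 2 * ((t₀ - s) * z) := by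
        nlinarith [hstep1, hstep2, hstep4]
      have hD : σ t₀ - σ s ≤ (t₀ - s) * z :=
        le_of_mul_le_mul_left hfinal (half_pos hcpos)
      exact EReal.coe_le_coe_iff.2 ((div_le_iff₀ hts).2 (by linarith))
    have hle : Filter.limsup (fun s => (((σ t₀ - σ s) / (t₀ - s) : ℝ) : EReal))
        (nhdsWithin t₀ (Iio t₀)) ≤ ((z : ℝ) : EReal) :=
      Filter.limsup_le_of_le (by isBoundedDefault) hev
    exact absurd hzL (not_lt.2 hle)
  -- conclusion
  intro t ht hmem'
  have htmem : t ∈ Icc (0:ℝ) T := ⟨(ht₀pos.trans ht.1).le, ht.2⟩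
  have hmono : σ t₀ ≤ σ t := hb' ht₀mem htmem ht.1.le
  have hE'le : E' (σ t) ≤ E' (σ t₀) := by
    rcases eq_or_lt_of_le hmono with h | h
    · rw [← h]
    · exact (hE'anti hσt₀ hmem' h).le
  have h8 := ha' t htmem
  have ht2 : t₀ ^ 2 < t ^ 2 := by nlinarith [ht.1, ht₀pos]
  have h9 : t ^ 2 * E' (σ t) ≤ t ^ 2 * E' (σ t₀) :=
    mul_le_mul_of_nonneg_left hE'le (by positivity)
  have hE'neg : E' (σ t₀) < 0 := by nlinarith [key, ht₀pos]
  have h10 : (t ^ 2 - t₀ ^ 2) * E' (σ t₀) < 0 :=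
    mul_neg_of_pos_of_neg (by linarith) hE'neg
  nlinarith [key, h8, h9, h10]
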